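/- Let 𝒯, 𝒯' be normalised 2-head Büchi transducers over disjoint alphabets Σin and Σout, viewed as Büchi automata over Σ = Σin ∪ Σout with distribution σ(a) = 1 for a ∈ Σin and σ(a) = 2 otherwise. If 𝒯 ⊑(ω,ω) 𝒯' then R(𝒯) ⊆ R(𝒯'). -/

import Mathlib

open scoped Classical

/-- A Büchi automaton over alphabet `S`. -/
structure BA (S : Type) where
  Q : Type
  init : Q
  trans : Q → S → Q → Prop
  acc : Q → Prop

/-- The Büchi language of `A`: infinite words with a run from the initial state
visiting accepting states infinitely often. -/
def BA.Lang {S : Type} (A : BA S) : Set (ℕ → S) :=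
  { w | ∃ ρ : ℕ → A.Q, ρ 0 = A.init ∧ (∀ n, A.trans (ρ n) (w n) (ρ (n+1))) ∧
        ∀ n, ∃ m, n ≤ m ∧ A.acc (ρ m) }

/-- A configuration of the two-buffer simulation game: Spoiler's state, contents of
the two FIFO buffers (head = oldest letter), Duplicator's state. -/
structure Cfg {S : Type} (A B : BA S) where
  qa : A.Q
  b1 : List S
  b2 : List S
  qb : B.Q

/-- The configuration after Spoiler's move `m = (a, q')`: his state becomes `q'` and
the letter `a` is appended to buffer `σ a` (`true` = buffer 1, `false` = buffer 2). -/
def midCfg {S : Type} {A B : BA S} (σ : S → Bool) (c : Cfg A B) (m : S × A.Q) : Cfg A B :=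
  ⟨m.2, if σ m.1 then c.b1 ++ [m.1] else c.b1, if σ m.1 then c.b2 else c.b2 ++ [m.1], c.qb⟩

/-- Applying a finite sequence of Duplicator consumption steps: each step picks a buffer
(`true` = buffer 1) and a successor state, consuming the oldest letter of that buffer
along a matching transition of `B`.  Returns `none` if some step is illegal. -/
noncomputable def dupApply {S : Type} (A B : BA S) :
    Cfg A B → List (Bool × B.Q) → Option (Cfg A B)
  | c, [] => some c
  | c, (j, p') :: ms =>
    if j then
      match c.b1 with
      | [] => none
      | b :: β => if B.trans c.qb b p' then dupApply A B ⟨c.qa, β, c.b2, p'⟩ ms else none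
    else
      match c.b2 with
      | [] => none
      | b :: β => if B.trans c.qb b p' then dupApply A B ⟨c.qa, c.b1, β, p'⟩ ms else none

/-- The configuration at the start of round `n` (i.e. after Duplicator's moves of
round `n-1`), given Spoiler's moves `sp` and Duplicator's responses `dm`;
`none` once an illegal move has occurred. -/
noncomputable def playCfg {S : Type} (A B : BA S) (σ : S → Bool)
    (sp : ℕ → S × A.Q) (dm : ℕ → List (Bool × B.Q)) : ℕ → Option (Cfg A B)
  | 0 => some ⟨A.init, [], [], B.init⟩
  | n+1 =>
    match playCfg A B σ sp dm n with
    | none => none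
    | some c =>
      if A.trans c.qa (sp n).1 (sp n).2 then dupApply A B (midCfg σ c (sp n)) (dm n) else none

/-- Number of letters put into buffer `j` by Spoiler during the first `n` rounds. -/
noncomputable def pushed {S : Type} {QA : Type} (σ : S → Bool) (sp : ℕ → S × QA)
    (j : Bool) (n : ℕ) : ℕ :=
  ((Finset.range n).filter fun i => σ (sp i).1 = j).card

/-- Number of letters consumed from buffer `j` by Duplicator during the first `n` rounds. -/
noncomputable def consumed {QB : Type} (dm : ℕ → List (Bool × QB)) (j : Bool) (n : ℕ) : ℕ :=
  ∑ i ∈ Finset.range n, ((dm i).filter fun x => x.1 = j).length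

/-- Duplicator's strategy is consistent with the moves `dm` of a play. -/
def Consistent {S : Type} (A B : BA S)
    (dstrat : List ((S × A.Q) × List (Bool × B.Q)) → (S × A.Q) → List (Bool × B.Q))
    (sp : ℕ → S × A.Q) (dm : ℕ → List (Bool × B.Q)) : Prop :=
  ∀ n, dm n = dstrat (List.ofFn fun i : Fin n => (sp i, dm i)) (sp n)

/-- Spoiler's moves are legal as long as the play is defined. -/
def SpLegal {S : Type} (A B : BA S) (σ : S → Bool)
    (sp : ℕ → S × A.Q) (dm : ℕ → List (Bool × B.Q)) : Prop :=
  ∀ n c, playCfg A B σ sp dm n = some c → A.trans c.qa (sp n).1 (sp n).2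

/-- Duplicator's winning condition for a play of the two-buffer game with
capacities `(k1, k2)`: the buffers never exceed their capacities (checked after her
moves), and either Spoiler's run visits accepting states only finitely often, or
every letter put into a buffer is eventually consumed and Duplicator's run visits
accepting states infinitely often. -/
def Win2 {S : Type} (A B : BA S) (σ : S → Bool) (k1 k2 : ℕ∞)
    (sp : ℕ → S × A.Q) (dm : ℕ → List (Bool × B.Q)) : Prop :=
  (∀ n c, playCfg A B σ sp dm n = some c →
      (c.b1.length : ℕ∞) ≤ k1 ∧ (c.b2.length : ℕ∞) ≤ k2) ∧
  ((∃ N, ∀ n, N ≤ n → ¬ A.acc (sp n).2) ∨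
    ((∀ n j, ∃ m, pushed σ sp j n ≤ consumed dm j m) ∧
     (∀ n, ∃ m, n ≤ m ∧ ∃ x ∈ dm m, B.acc x.2)))

/-- `dstrat` is a winning strategy for Duplicator in the two-buffer simulation game on
`A`, `B` with letter distribution `σ` and capacities `(k1, k2)`: against every legal
behaviour of Spoiler, all of Duplicator's prescribed moves are legal (the play never
breaks) and the resulting play is won by Duplicator. -/
def WinningStrat2 {S : Type} (A B : BA S) (σ : S → Bool) (k1 k2 : ℕ∞)
    (dstrat : List ((S × A.Q) × List (Bool × B.Q)) → (S × A.Q) → List (Bool × B.Q)) : Prop :=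
  ∀ sp dm, Consistent A B dstrat sp dm → SpLegal A B σ sp dm →
    (∀ n, (playCfg A B σ sp dm n).isSome) ∧ Win2 A B σ k1 k2 sp dm

/-- Two-buffer simulation `A ⊑(k1,k2) B`: Duplicator has a winning strategy. -/
def Sim2 {S : Type} (A B : BA S) (σ : S → Bool) (k1 k2 : ℕ∞) : Prop :=
  ∃ dstrat, WinningStrat2 A B σ k1 k2 dstrat
/-- The concatenation of the infinite sequence of finite words `g 0, g 1, g 2, …`,
as a finite or infinite word represented by a function `ℕ → Option α`
(`iConcat g k = some a` iff the concatenation has an `k`-th letter and it is `a`). -/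
noncomputable def iConcat {α : Type} (g : ℕ → List α) : ℕ → Option α := fun k =>
  if h : ∃ m, k < ((List.range m).map g).flatten.length
  then ((List.range h.choose).map g).flatten[k]?
  else none

/-- The projection of an infinite word `w` onto the letters of buffer index `j`
(i.e. onto the sub-alphabet `σ⁻¹(j)`), as a finite or infinite word. -/
noncomputable def projW {S : Type} (σ : S → Bool) (j : Bool) (w : ℕ → S) : ℕ → Option S :=
  iConcat fun n => if σ (w n) = j then [w n] else []
/-- A 2-head Büchi transducer with input alphabet `Si` and output alphabet `So`. -/
structure Trd (Si So : Type) where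
  Q : Type
  init : Q
  delta : Set (Q × List Si × List So × Q)
  acc : Q → Prop

/-- A transducer is normalised if every transition consumes exactly one letter,
either from the input or from the output alphabet. -/
def Trd.Normalised {Si So : Type} (T : Trd Si So) : Prop :=
  ∀ t ∈ T.delta, (∃ a, t.2.1 = [a] ∧ t.2.2.1 = []) ∨ (t.2.1 = [] ∧ ∃ b, t.2.2.1 = [b])

/-- The infinitary rational relation recognised by `T`: pairs of finite-or-infinite
words `(u, v)` obtained by concatenating the input parts and the output parts of an
accepting run. -/
def Trd.Rel {Si So : Type} (T : Trd Si So) : Set ((ℕ → Option Si) × (ℕ → Option So)) :=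
  { p | ∃ (ρ : ℕ → T.Q) (us : ℕ → List Si) (vs : ℕ → List So),
      ρ 0 = T.init ∧ (∀ n, (ρ n, us n, vs n, ρ (n+1)) ∈ T.delta) ∧
      (∀ n, ∃ m, n ≤ m ∧ T.acc (ρ m)) ∧ p.1 = iConcat us ∧ p.2 = iConcat vs }

/-- A (normalised) transducer viewed as a Büchi automaton over `Si ⊕ So`. -/
def Trd.toBA {Si So : Type} (T : Trd Si So) : BA (Si ⊕ So) where
  Q := T.Q
  init := T.init
  trans := fun q x q' =>
    match x with
    | Sum.inl a => (q, [a], [], q') ∈ T.delta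
    | Sum.inr b => (q, [], [b], q') ∈ T.delta
  acc := T.acc

section Aux

/-- flatten of the first `m` blocks. -/
noncomputable def flat {α : Type} (g : ℕ → List α) (m : ℕ) : List α :=
  ((List.range m).map g).flatten

lemma flat_succ {α : Type} (g : ℕ → List α) (m : ℕ) : flat g (m+1) = flat g m ++ g m := by
  simp [flat, List.range_succ]

lemma mono_of_succ {α : Type} {f : ℕ → List α} (h : ∀ n, f n <+: f (n+1)) :
    ∀ {m n : ℕ}, m ≤ n → f m <+: f n := by
  intro m n hmn
  induction n with
  | zero => cases Nat.le_zero.mp hmn; exact List.prefix_rfl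
  | succ n ih =>
    rcases Nat.lt_or_ge m (n+1) with h1 | h1
    · exact (ih (Nat.lt_succ_iff.mp h1)).trans (h n)
    · have he : m = n+1 := le_antisymm hmn h1
      subst he; exact List.prefix_rfl

lemma flat_prefix {α : Type} (g : ℕ → List α) {m n : ℕ} (h : m ≤ n) : flat g m <+: flat g n :=
  mono_of_succ (fun k => by rw [flat_succ]; exact List.prefix_append _ _) h

lemma iConcat_eq_of_lt {α : Type} (g : ℕ → List α) {k m : ℕ}
    (h : k < (flat g m).length) : iConcat g k = (flat g m)[k]? := by
  have hex : ∃ m, k < ((List.range m).map g).flatten.length := ⟨m, h⟩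
  simp only [iConcat, dif_pos hex]
  have h2 : k < (flat g hex.choose).length := hex.choose_spec
  obtain ⟨t1, e1⟩ := flat_prefix g (le_max_left hex.choose m)
  obtain ⟨t2, e2⟩ := flat_prefix g (le_max_right hex.choose m)
  show (flat g hex.choose)[k]? = (flat g m)[k]?
  rw [← List.getElem?_append_left (l₂ := t1) h2, ← List.getElem?_append_left (l₂ := t2) h,
    e1, e2]

lemma iConcat_eq_none {α : Type} (g : ℕ → List α) {k : ℕ}
    (h : ∀ m, (flat g m).length ≤ k) : iConcat g k = none := by
  have hn : ¬ ∃ m, k < ((List.range m).map g).flatten.length := by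
    rintro ⟨m, hm⟩; exact absurd hm (not_lt.mpr (h m))
  simp only [iConcat, dif_neg hn]

lemma iConcat_congr {α : Type} (g g' : ℕ → List α)
    (h1 : ∀ m, ∃ m', flat g m <+: flat g' m')
    (h2 : ∀ m, ∃ m', flat g' m <+: flat g m') :
    iConcat g = iConcat g' := by
  funext k
  by_cases hex : ∃ m, k < (flat g m).length
  · obtain ⟨m, hm⟩ := hex
    obtain ⟨m', hp⟩ := h1 m
    have hm' : k < (flat g' m').length := lt_of_lt_of_le hm hp.length_le
    rw [iConcat_eq_of_lt g hm, iConcat_eq_of_lt g' hm']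
    obtain ⟨t, e⟩ := hp
    rw [← e, List.getElem?_append_left hm]
  · push_neg at hex
    have hex' : ∀ m, (flat g' m).length ≤ k := by
      intro m
      obtain ⟨m', hp⟩ := h2 m
      exact hp.length_le.trans (hex m')
    rw [iConcat_eq_none g hex, iConcat_eq_none g' hex']

/-- `Links B q l q'` : the list of moves `(tag, state, letter, state')` forms a chain
of transitions from `q` to `q'`. -/
def Links {S : Type} (B : BA S) : B.Q → List (Bool × B.Q × S × B.Q) → B.Q → Prop
  | q, [], q' => q' = q
  | q, x :: l, q' => x.2.1 = q ∧ Links B x.2.2.2 l q'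

lemma links_append {S : Type} (B : BA S) (l₁ : List (Bool × B.Q × S × B.Q)) :
    ∀ {q q₁ q₂ : B.Q} (l₂ : List (Bool × B.Q × S × B.Q)),
    Links B q l₁ q₁ → Links B q₁ l₂ q₂ → Links B q (l₁ ++ l₂) q₂ := by
  induction l₁ with
  | nil =>
    intro q q₁ q₂ l₂ h1 h2
    have : q₁ = q := h1
    subst this; simpa using h2
  | cons x l ih =>
    rintro q q₁ q₂ l₂ ⟨hx, hl⟩ h2
    exact ⟨hx, ih _ hl h2⟩

lemma links_zero {S : Type} (B : BA S) (l : List (Bool × B.Q × S × B.Q)) {q q' : B.Q}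
    (hl : Links B q l q') (h : 0 < l.length) : (l[0]'h).2.1 = q := by
  cases l with
  | nil => simp at h
  | cons x l => exact hl.1

lemma links_adj {S : Type} (B : BA S) (l : List (Bool × B.Q × S × B.Q)) :
    ∀ {q q' : B.Q}, Links B q l q' →
    ∀ k (h : k + 1 < l.length), (l[k]'(by omega)).2.2.2 = (l[k+1]'h).2.1 := by
  induction l with
  | nil => intro q q' _ k h; simp at h
  | cons x l ih =>
    rintro q q' ⟨hx, hl⟩ k h
    cases k with
    | zero =>
      have h0 : 0 < l.length := by simpa using h
      simpa using (links_zero B l hl h0).symm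
    | succ k =>
      have := ih hl k (by simpa using h)
      simpa using this

lemma playCfg_succ_elim {S : Type} (A B : BA S) (σ : S → Bool)
    (sp : ℕ → S × A.Q) (dm : ℕ → List (Bool × B.Q)) {n : ℕ} {c' : Cfg A B}
    (h : playCfg A B σ sp dm (n+1) = some c') :
    ∃ c, playCfg A B σ sp dm n = some c ∧ A.trans c.qa (sp n).1 (sp n).2 ∧
      dupApply A B (midCfg σ c (sp n)) (dm n) = some c' := by
  rw [playCfg] at h
  cases hp : playCfg A B σ sp dm n with
  | none => rw [hp] at h; simp at h
  | some c =>
    rw [hp] at h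
    simp only at h
    split at h
    · exact ⟨c, rfl, by assumption, h⟩
    · simp at h

lemma dupApply_qa {S : Type} (A B : BA S) :
    ∀ (ms : List (Bool × B.Q)) (c c' : Cfg A B),
      dupApply A B c ms = some c' → c'.qa = c.qa := by
  intro ms
  induction ms with
  | nil => intro c c' h; simp [dupApply] at h; rw [← h]
  | cons m ms ih =>
    rintro ⟨qa, b1, b2, qb⟩ c' h
    obtain ⟨j, p'⟩ := m
    cases j with
    | true =>
      cases b1 with
      | nil => simp [dupApply] at h
      | cons b β =>
        rw [dupApply] at h
        simp only [if_true] at h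
        split at h
        · exact ih ⟨qa, β, b2, p'⟩ c' h
        · simp at h
    | false =>
      cases b2 with
      | nil => simp [dupApply] at h
      | cons b β =>
        rw [dupApply] at h
        simp only [Bool.false_eq_true, if_false] at h
        split at h
        · exact ih ⟨qa, b1, β, p'⟩ c' h
        · simp at h

lemma filterMap_tag {QB SS γ : Type} (σ : SS → Bool) (j : Bool) (f : SS → Option γ)
    (hf : ∀ a, σ a ≠ j → f a = none) :
    ∀ (l : List (Bool × QB × SS × QB)), (∀ x ∈ l, σ x.2.2.1 = x.1) →
    l.filterMap (fun x => f x.2.2.1) =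
      ((l.filter (fun x => x.1 = j)).map (fun x => x.2.2.1)).filterMap f := by
  intro l
  induction l with
  | nil => intro _; simp
  | cons x l ih =>
    intro htag
    have hx := htag x List.mem_cons_self
    have hrest := ih (fun y hy => htag y (List.mem_cons_of_mem x hy))
    by_cases hj : x.1 = j
    · rw [List.filter_cons, if_pos (by simp [hj])]
      simp only [List.map_cons, List.filterMap_cons, hrest]
    · rw [List.filter_cons, if_neg (by simp [hj])]
      rw [List.filterMap_cons, hf x.2.2.1 (by rw [hx]; exact hj), hrest]

lemma flat_toList_eq {α β : Type} (t : ℕ → α) (F : ℕ → List α)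
    (hF : ∀ k n (h : k < (F n).length), t k = (F n)[k]) (f : α → Option β) :
    ∀ (n K), K ≤ (F n).length →
      flat (fun k => (f (t k)).toList) K = ((F n).take K).filterMap f := by
  intro n K
  induction K with
  | zero => intro _; simp [flat]
  | succ K ih =>
    intro hK
    have hKn : K < (F n).length := hK
    rw [flat_succ, ih (by omega), List.take_succ, List.getElem?_eq_getElem hKn,
      List.filterMap_append]
    congr 1
    rw [hF K n hKn]
    cases hfx : f ((F n)[K]) <;> simp [List.filterMap_cons, hfx]

lemma dupApply_spec {S : Type} (A B : BA S) :
    ∀ (ms : List (Bool × B.Q)) (c c' : Cfg A B), dupApply A B c ms = some c' →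
    ∃ seg : List (Bool × B.Q × S × B.Q),
      seg.map (fun t => (t.1, t.2.2.2)) = ms ∧
      Links B c.qb seg c'.qb ∧
      (∀ t ∈ seg, B.trans t.2.1 t.2.2.1 t.2.2.2) ∧
      c'.qa = c.qa ∧
      c'.b1 = c.b1.drop (ms.filter (fun x => x.1 = true)).length ∧
      c'.b2 = c.b2.drop (ms.filter (fun x => x.1 = false)).length ∧
      (ms.filter (fun x => x.1 = true)).length ≤ c.b1.length ∧
      (ms.filter (fun x => x.1 = false)).length ≤ c.b2.length ∧
      (seg.filter (fun t => t.1 = true)).map (fun t => t.2.2.1) =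
        c.b1.take (ms.filter (fun x => x.1 = true)).length ∧
      (seg.filter (fun t => t.1 = false)).map (fun t => t.2.2.1) =
        c.b2.take (ms.filter (fun x => x.1 = false)).length := by
  intro ms
  induction ms with
  | nil =>
    intro c c' h
    simp [dupApply] at h
    subst h
    exact ⟨[], by simp, rfl, by simp, rfl, by simp, by simp, by simp, by simp, by simp, by simp⟩
  | cons m ms ih =>
    rintro ⟨qa, b1, b2, qb⟩ c' h
    obtain ⟨j, p'⟩ := m
    cases j with
    | true =>
      cases b1 with
      | nil => simp [dupApply] at h
      | cons b β =>
        rw [dupApply] at h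
        simp only [if_true] at h
        split at h
        case isTrue htr =>
          obtain ⟨seg, h1, h2, h3, h4, h5, h6, h7, h8, h9, h10⟩ := ih ⟨qa, β, b2, p'⟩ c' h
          refine ⟨(true, qb, b, p') :: seg, by simp [h1], ⟨rfl, h2⟩, ?_, h4, ?_, h6, ?_, h8, ?_, ?_⟩
          · intro t ht
            rcases List.mem_cons.mp ht with rfl | ht
            · exact htr
            · exact h3 t ht
          · simpa using h5
          · simpa using h7
          · rw [List.filter_cons, if_pos (by simp)]
            simpa using h9
          · rw [List.filter_cons, if_neg (by simp)]
            simpa using h10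
        case isFalse => simp at h
    | false =>
      cases b2 with
      | nil => simp [dupApply] at h
      | cons b β =>
        rw [dupApply] at h
        simp only [Bool.false_eq_true, if_false] at h
        split at h
        case isTrue htr =>
          obtain ⟨seg, h1, h2, h3, h4, h5, h6, h7, h8, h9, h10⟩ := ih ⟨qa, b1, β, p'⟩ c' h
          refine ⟨(false, qb, b, p') :: seg, by simp [h1], ⟨rfl, h2⟩, ?_, h4, h5, ?_, h7, ?_, ?_, ?_⟩
          · intro t ht
            rcases List.mem_cons.mp ht with rfl | ht
            · exact htr
            · exact h3 t ht
          · simpa using h6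
          · simpa using h8
          · rw [List.filter_cons, if_neg (by simp)]
            simpa using h9
          · rw [List.filter_cons, if_pos (by simp)]
            simpa using h10
        case isFalse => simp at h

end Aux

/-- For normalised 2-head Büchi transducers over disjoint input and
output alphabets, viewed as Büchi automata over `Σin ⊕ Σout` with input letters going
to buffer 1: `𝒯 ⊑(ω,ω) 𝒯'` implies `R(𝒯) ⊆ R(𝒯')`. -/
theorem sim2_implies_relation_inclusion {Si So : Type} (T T' : Trd Si So)
    (hT : T.Normalised) (hT' : T'.Normalised)
    (h : Sim2 T.toBA T'.toBA (fun x => x.isLeft) ⊤ ⊤) :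
    T.Rel ⊆ T'.Rel := by
  rintro ⟨u, v⟩ ⟨ρ, us, vs, hρ0, htrd, hacc, hu, hv⟩
  set A := T.toBA with hA
  set B := T'.toBA with hB
  set σ : Si ⊕ So → Bool := fun x => x.isLeft with hσdef
  obtain ⟨dstrat, hstrat⟩ := h
  -- the word played by Spoiler
  have hW : ∀ n, ∃ x : Si ⊕ So, us n = x.getLeft?.toList ∧ vs n = x.getRight?.toList := by
    intro n
    rcases hT _ (htrd n) with ⟨a, h1, h2⟩ | ⟨h1, b, h2⟩
    · exact ⟨Sum.inl a, by simpa using h1, by simpa using h2⟩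
    · exact ⟨Sum.inr b, by simpa using h1, by simpa using h2⟩
  choose w hwu hwv using hW
  set sp : ℕ → (Si ⊕ So) × A.Q := fun n => (w n, ρ (n+1)) with hspdef
  -- Duplicator's moves, generated by the strategy
  set hist : ℕ → List (((Si ⊕ So) × A.Q) × List (Bool × B.Q)) :=
    fun n => Nat.rec [] (fun k H => H ++ [(sp k, dstrat H (sp k))]) n with histdef
  set dm : ℕ → List (Bool × B.Q) := fun n => dstrat (hist n) (sp n) with hdmdef
  have hist_succ : ∀ n, hist (n+1) = hist n ++ [(sp n, dm n)] := fun n => rfl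
  have hist_eq : ∀ n, hist n = List.ofFn (fun i : Fin n => (sp i, dm i)) := by
    intro n
    induction n with
    | zero => rfl
    | succ n ih =>
      rw [hist_succ, ih, List.ofFn_succ']
      simp [List.concat_eq_append]
  have hconsist : Consistent A B dstrat sp dm := by
    intro n; rw [← hist_eq n]
  -- Spoiler's moves are legal
  have htransA : ∀ n, A.trans (ρ n) (w n) (ρ (n+1)) := by
    intro n
    rcases hx : w n with a | b
    · have h1 := hwu n; have h2 := hwv n
      rw [hx] at h1 h2
      simp only [Sum.getLeft?, Sum.getRight?, Option.toList] at h1 h2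
      show (ρ n, [a], [], ρ (n+1)) ∈ T.delta
      rw [← h1, ← h2]; exact htrd n
    · have h1 := hwu n; have h2 := hwv n
      rw [hx] at h1 h2
      simp only [Sum.getLeft?, Sum.getRight?, Option.toList] at h1 h2
      show (ρ n, [], [b], ρ (n+1)) ∈ T.delta
      rw [← h1, ← h2]; exact htrd n
  have hQA : ∀ n c, playCfg A B σ sp dm n = some c → c.qa = ρ n := by
    intro n c hc
    cases n with
    | zero =>
      rw [playCfg] at hc
      obtain rfl : (⟨A.init, [], [], B.init⟩ : Cfg A B) = c := Option.some.inj hc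
      exact hρ0.symm
    | succ n =>
      obtain ⟨c0, hc0, htr, hdup⟩ := playCfg_succ_elim A B σ sp dm hc
      have hqa := dupApply_qa A B (dm n) _ _ hdup
      rw [hqa]
      rfl
  have hlegal : SpLegal A B σ sp dm := by
    intro n c hc
    rw [hQA n c hc]
    exact htransA n
  obtain ⟨hplay, hwin⟩ := hstrat sp dm hconsist hlegal
  obtain ⟨-, hdisj⟩ := hwin
  have hwin2 : (∀ n j, ∃ m, pushed σ sp j n ≤ consumed dm j m) ∧
      (∀ n, ∃ m, n ≤ m ∧ ∃ x ∈ dm m, B.acc x.2) := by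
    rcases hdisj with ⟨N, hN⟩ | h2
    · obtain ⟨m, hm, hma⟩ := hacc (N+1)
      cases m with
      | zero => omega
      | succ k => exact absurd hma (hN k (by omega))
    · exact h2
  obtain ⟨hcons2, hbacc⟩ := hwin2
  -- configurations of the play
  choose cf hcf using fun n => Option.isSome_iff_exists.mp (hplay n)
  have hcf0 : cf 0 = ⟨A.init, [], [], B.init⟩ := by
    have h0 := hcf 0
    rw [playCfg] at h0
    exact (Option.some.inj h0).symm
  have hstep : ∀ n, dupApply A B (midCfg σ (cf n) (sp n)) (dm n) = some (cf (n+1)) := by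
    intro n
    obtain ⟨c0, hc0, htr, hdup⟩ := playCfg_succ_elim A B σ sp dm (hcf (n+1))
    rw [hcf n] at hc0
    obtain rfl : cf n = c0 := Option.some.inj hc0
    exact hdup
  choose seg hs1 hs2 hs3 hs4 hs5 hs6 hs7 hs8 hs9 hs10 using
    fun n => dupApply_spec A B (dm n) _ _ (hstep n)
  -- pushed-letter lists
  set pL : Bool → ℕ → List (Si ⊕ So) :=
    fun j n => ((List.range n).map (fun i => (sp i).1)).filter (fun a => σ a = j) with hpLdef
  have pL_succ : ∀ j n, pL j (n+1) = pL j n ++ if σ (sp n).1 = j then [(sp n).1] else [] := by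
    intro j n
    by_cases hj : σ (sp n).1 = j <;>
      simp [hpLdef, List.range_succ, List.filter_append, List.filter_cons, hj]
  have pL_mem : ∀ j n a, a ∈ pL j n → σ a = j := by
    intro j n a ha
    have := (List.mem_filter.mp ha).2
    simpa using this
  have pL_prefix : ∀ (j : Bool) {m n : ℕ}, m ≤ n → pL j m <+: pL j n :=
    fun j => mono_of_succ (fun n => by rw [pL_succ]; exact List.prefix_append _ _)
  have pushed_succ : ∀ j n, pushed σ sp j (n+1) =
      pushed σ sp j n + if σ (sp n).1 = j then 1 else 0 := by
    intro j n
    simp only [pushed, Finset.range_add_one, Finset.filter_insert]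
    split
    · rw [Finset.card_insert_of_notMem (by simp)]
    · simp
  have pL_len : ∀ j n, pushed σ sp j n = (pL j n).length := by
    intro j n
    induction n with
    | zero => simp [pushed, hpLdef]
    | succ n ih =>
      rw [pushed_succ, pL_succ, List.length_append, ih]
      split <;> simp
  have consumed_succ : ∀ j n, consumed dm j (n+1) =
      consumed dm j n + ((dm n).filter fun x => x.1 = j).length :=
    fun j n => Finset.sum_range_succ _ n
  have consumed_mono : ∀ (j : Bool) {m n : ℕ}, m ≤ n → consumed dm j m ≤ consumed dm j n := by
    intro j m n hmn
    simp only [consumed]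
    exact Finset.sum_le_sum_of_subset (Finset.range_subset_range.mpr hmn)
  -- global lists
  set G : ℕ → List (Bool × B.Q × (Si ⊕ So) × B.Q) := flat seg with hGdef
  set DL : ℕ → List (Bool × B.Q) := flat dm with hDLdef
  have G_succ : ∀ n, G (n+1) = G n ++ seg n := flat_succ seg
  have DL_succ : ∀ n, DL (n+1) = DL n ++ dm n := flat_succ dm
  set getIns : (Bool × B.Q × (Si ⊕ So) × B.Q) → Option Si :=
    fun x => x.2.2.1.getLeft? with hgIdef
  set getOuts : (Bool × B.Q × (Si ⊕ So) × B.Q) → Option So :=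
    fun x => x.2.2.1.getRight? with hgOdef
  have hfI : ∀ a : Si ⊕ So, σ a ≠ true → a.getLeft? = none := by
    rintro (a | b) ha
    · exact absurd rfl ha
    · rfl
  have hfO : ∀ a : Si ⊕ So, σ a ≠ false → a.getRight? = none := by
    rintro (a | b) ha
    · rfl
    · exact absurd rfl ha
  -- the main invariant
  have INV : ∀ n,
      (cf n).b1 = (pL true n).drop (consumed dm true n) ∧
      (cf n).b2 = (pL false n).drop (consumed dm false n) ∧
      consumed dm true n ≤ (pL true n).length ∧
      consumed dm false n ≤ (pL false n).length ∧
      (G n).filterMap getIns = ((pL true n).take (consumed dm true n)).filterMap Sum.getLeft? ∧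
      (G n).filterMap getOuts = ((pL false n).take (consumed dm false n)).filterMap Sum.getRight? ∧
      Links B B.init (G n) (cf n).qb ∧
      (G n).map (fun t => (t.1, t.2.2.2)) = DL n ∧
      (∀ t ∈ G n, B.trans t.2.1 t.2.2.1 t.2.2.2) := by
    intro n
    induction n with
    | zero =>
      have hG0 : G 0 = [] := rfl
      have hDL0 : DL 0 = [] := rfl
      have hpL0 : ∀ j, pL j 0 = [] := fun j => rfl
      have hcc : ∀ j, consumed dm j 0 = 0 := fun j => rfl
      refine ⟨?_, ?_, ?_, ?_, ?_, ?_, ?_, ?_, ?_⟩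
      · rw [hcf0, hpL0, hcc]; rfl
      · rw [hcf0, hpL0, hcc]; rfl
      · rw [hpL0, hcc]
        exact Nat.zero_le _
      · rw [hpL0, hcc]
        exact Nat.zero_le _
      · rw [hG0, hpL0, hcc]; rfl
      · rw [hG0, hpL0, hcc]; rfl
      · show Links B B.init [] (cf 0).qb
        rw [hcf0]
        rfl
      · rw [hG0, hDL0]; rfl
      · rw [hG0]; intro t ht; simp at ht
    | succ n ih =>
      obtain ⟨ib1, ib2, il1, il2, iins, iouts, ilinks, imap, itrans⟩ := ih
      have hmid1 : (midCfg σ (cf n) (sp n)).b1 =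
          (pL true (n+1)).drop (consumed dm true n) := by
        show (if σ (sp n).1 then (cf n).b1 ++ [(sp n).1] else (cf n).b1) = _
        rw [pL_succ]
        cases hσn : σ (sp n).1 with
        | true =>
          rw [if_pos rfl, if_pos rfl, ib1, List.drop_append_of_le_length il1]
        | false =>
          rw [if_neg (by simp), if_neg (by simp), List.append_nil]
          exact ib1
      have hmid2 : (midCfg σ (cf n) (sp n)).b2 =
          (pL false (n+1)).drop (consumed dm false n) := by
        show (if σ (sp n).1 then (cf n).b2 else (cf n).b2 ++ [(sp n).1]) = _
        rw [pL_succ]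
        cases hσn : σ (sp n).1 with
        | true =>
          rw [if_pos rfl, if_neg (by simp), List.append_nil]
          exact ib2
        | false =>
          rw [if_neg (by simp), if_pos rfl, ib2,
            List.drop_append_of_le_length il2]
      have hb1' : (cf (n+1)).b1 = (pL true (n+1)).drop
          (consumed dm true n + ((dm n).filter fun x => x.1 = true).length) := by
        rw [hs5 n, hmid1, List.drop_drop, Nat.add_comm]
      have hb2' : (cf (n+1)).b2 = (pL false (n+1)).drop
          (consumed dm false n + ((dm n).filter fun x => x.1 = false).length) := by
        rw [hs6 n, hmid2, List.drop_drop, Nat.add_comm]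
      have hl1' : consumed dm true n + ((dm n).filter fun x => x.1 = true).length ≤
          (pL true (n+1)).length := by
        have h7 := hs7 n
        rw [hmid1, List.length_drop] at h7
        have := (pL_prefix true (Nat.le_add_right n 1)).length_le
        omega
      have hl2' : consumed dm false n + ((dm n).filter fun x => x.1 = false).length ≤
          (pL false (n+1)).length := by
        have h8 := hs8 n
        rw [hmid2, List.length_drop] at h8
        have := (pL_prefix false (Nat.le_add_right n 1)).length_le
        omega
      have htag : ∀ x ∈ seg n, σ x.2.2.1 = x.1 := by
        intro x hx
        cases hx1 : x.1 with
        | true =>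
          have hxf : x ∈ (seg n).filter (fun t => t.1 = true) :=
            List.mem_filter.mpr ⟨hx, by simp [hx1]⟩
          have hmem := List.mem_map_of_mem (f := fun (t : Bool × B.Q × (Si ⊕ So) × B.Q) => t.2.2.1) hxf
          rw [hs9 n] at hmem
          have hmem2 := List.mem_of_mem_take hmem
          rw [hmid1] at hmem2
          exact pL_mem true (n+1) _ (List.mem_of_mem_drop hmem2)
        | false =>
          have hxf : x ∈ (seg n).filter (fun t => t.1 = false) :=
            List.mem_filter.mpr ⟨hx, by simp [hx1]⟩
          have hmem := List.mem_map_of_mem (f := fun (t : Bool × B.Q × (Si ⊕ So) × B.Q) => t.2.2.1) hxf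
          rw [hs10 n] at hmem
          have hmem2 := List.mem_of_mem_take hmem
          rw [hmid2] at hmem2
          exact pL_mem false (n+1) _ (List.mem_of_mem_drop hmem2)
      have hsegIns : (seg n).filterMap getIns =
          (((pL true (n+1)).drop (consumed dm true n)).take
            ((dm n).filter fun x => x.1 = true).length).filterMap Sum.getLeft? := by
        rw [filterMap_tag σ true Sum.getLeft? hfI (seg n) htag, hs9 n, hmid1]
      have hsegOuts : (seg n).filterMap getOuts =
          (((pL false (n+1)).drop (consumed dm false n)).take
            ((dm n).filter fun x => x.1 = false).length).filterMap Sum.getRight? := by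
        rw [filterMap_tag σ false Sum.getRight? hfO (seg n) htag, hs10 n, hmid2]
      have htake1 : (pL true (n+1)).take
          (consumed dm true n + ((dm n).filter fun x => x.1 = true).length) =
          (pL true n).take (consumed dm true n) ++
            ((pL true (n+1)).drop (consumed dm true n)).take
              ((dm n).filter fun x => x.1 = true).length := by
        rw [List.take_add]
        congr 1
        rw [pL_succ, List.take_append_of_le_length il1]
      have htake2 : (pL false (n+1)).take
          (consumed dm false n + ((dm n).filter fun x => x.1 = false).length) =
          (pL false n).take (consumed dm false n) ++
            ((pL false (n+1)).drop (consumed dm false n)).take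
              ((dm n).filter fun x => x.1 = false).length := by
        rw [List.take_add]
        congr 1
        rw [pL_succ, List.take_append_of_le_length il2]
      refine ⟨?_, ?_, ?_, ?_, ?_, ?_, ?_, ?_, ?_⟩
      · rw [consumed_succ]; exact hb1'
      · rw [consumed_succ]; exact hb2'
      · rw [consumed_succ]; exact hl1'
      · rw [consumed_succ]; exact hl2'
      · rw [consumed_succ, G_succ, List.filterMap_append, iins, htake1,
          List.filterMap_append, hsegIns]
      · rw [consumed_succ, G_succ, List.filterMap_append, iouts, htake2,
          List.filterMap_append, hsegOuts]
      · rw [G_succ]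
        exact links_append B (G n) (seg n) ilinks (hs2 n)
      · rw [G_succ, DL_succ, List.map_append, imap, hs1 n]
      · intro t ht
        rcases List.mem_append.mp ((G_succ n) ▸ ht) with h' | h'
        · exact itrans t h'
        · exact hs3 n t h'
  -- lengths and unboundedness
  have hGlen : ∀ n, (G n).length = (DL n).length := by
    intro n
    have hm := (INV n).2.2.2.2.2.2.2.1
    rw [← hm, List.length_map]
  have hDLlen_succ : ∀ n, (DL (n+1)).length = (DL n).length + (dm n).length := by
    intro n; rw [DL_succ, List.length_append]
  have hcons_le : ∀ (j : Bool) (n : ℕ), consumed dm j n ≤ (DL n).length := by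
    intro j n
    induction n with
    | zero => rfl
    | succ n ih =>
      rw [consumed_succ, hDLlen_succ]
      exact Nat.add_le_add ih (List.length_filter_le _ _)
  have hDLmono : ∀ {m n : ℕ}, m ≤ n → (DL m).length ≤ (DL n).length :=
    fun hmn => (flat_prefix dm hmn).length_le
  have hpp : ∀ n, n ≤ pushed σ sp true n + pushed σ sp false n := by
    intro n
    induction n with
    | zero => simp
    | succ n ih =>
      rw [pushed_succ, pushed_succ]
      cases hσn : σ (sp n).1 <;> simp [hσn] <;> omega
  have htcunb : ∀ N, ∃ n, N ≤ (DL n).length := by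
    intro N
    rcases le_or_gt N (pushed σ sp true (2*N)) with hle | hlt
    · obtain ⟨m, hm⟩ := hcons2 (2*N) true
      exact ⟨m, le_trans (hle.trans hm) (hcons_le true m)⟩
    · have hle : N ≤ pushed σ sp false (2*N) := by have := hpp (2*N); omega
      obtain ⟨m, hm⟩ := hcons2 (2*N) false
      exact ⟨m, le_trans (hle.trans hm) (hcons_le false m)⟩
  have hGunb : ∀ k, ∃ n, k < (G n).length := by
    intro k
    obtain ⟨n, hn⟩ := htcunb (k+1)
    exact ⟨n, by rw [hGlen]; omega⟩
  have Gpre : ∀ {m n : ℕ}, m ≤ n → G m <+: G n := fun hmn => flat_prefix seg hmn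
  -- the global run of Duplicator
  set t : ℕ → Bool × B.Q × (Si ⊕ So) × B.Q :=
    fun k => (G (hGunb k).choose)[k]'((hGunb k).choose_spec) with htdef
  have ht : ∀ k n (hkn : k < (G n).length), t k = (G n)[k] := by
    intro k n hkn
    have h0 : k < (G (hGunb k).choose).length := (hGunb k).choose_spec
    show (G (hGunb k).choose)[k]'h0 = (G n)[k]
    rcases le_total (hGunb k).choose n with hle | hle
    · obtain ⟨e, he⟩ := Gpre hle
      calc (G (hGunb k).choose)[k]'h0
          = (G (hGunb k).choose ++ e)[k]'(by rw [he]; exact hkn) :=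
            (List.getElem_append_left h0).symm
        _ = (G n)[k]'hkn := List.getElem_of_eq he _
    · obtain ⟨e, he⟩ := Gpre hle
      calc (G (hGunb k).choose)[k]'h0
          = (G n ++ e)[k]'(by rw [he]; exact h0) := List.getElem_of_eq he.symm h0
        _ = (G n)[k]'hkn := List.getElem_append_left hkn
  set ρ' : ℕ → B.Q := fun k => (t k).2.1 with hρ'def
  have hρ'0 : ρ' 0 = B.init := by
    obtain ⟨n, hn⟩ := hGunb 0
    show (t 0).2.1 = B.init
    rw [ht 0 n hn]
    exact links_zero B (G n) (INV n).2.2.2.2.2.2.1 hn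
  have hadj : ∀ k, (t k).2.2.2 = ρ' (k+1) := by
    intro k
    obtain ⟨n, hn⟩ := hGunb (k+1)
    have hk : k < (G n).length := by omega
    show (t k).2.2.2 = (t (k+1)).2.1
    rw [ht k n hk, ht (k+1) n hn]
    exact links_adj B (G n) (INV n).2.2.2.2.2.2.1 k hn
  have htransB : ∀ k, B.trans (ρ' k) ((t k).2.2.1) (ρ' (k+1)) := by
    intro k
    rw [← hadj k]
    obtain ⟨n, hn⟩ := hGunb k
    show B.trans (t k).2.1 (t k).2.2.1 (t k).2.2.2
    rw [ht k n hn]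
    exact (INV n).2.2.2.2.2.2.2.2 _ (List.getElem_mem hn)
  -- acceptance
  have haccB : ∀ N, ∃ k, N ≤ k ∧ B.acc (ρ' k) := by
    intro N
    obtain ⟨m0, hm0⟩ := htcunb N
    obtain ⟨m, hmm0, x, hxdm, hxacc⟩ := hbacc m0
    obtain ⟨i, hi, hxi⟩ := List.mem_iff_getElem.mp hxdm
    have hkl : (DL m).length + i < (DL (m+1)).length := by rw [hDLlen_succ]; omega
    have hkG : (DL m).length + i < (G (m+1)).length := by rw [hGlen]; exact hkl
    refine ⟨(DL m).length + i + 1, ?_, ?_⟩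
    · have : N ≤ (DL m).length := hm0.trans (hDLmono hmm0)
      omega
    · rw [← hadj _]
      rw [ht _ (m+1) hkG]
      have hmap := (INV (m+1)).2.2.2.2.2.2.2.1
      have e0 := List.getElem_of_eq hmap (i := (DL m).length + i)
        (by rw [List.length_map]; exact hkG)
      rw [List.getElem_map] at e0
      have e1 := congrArg Prod.snd e0
      have e2 : (DL (m+1))[(DL m).length + i]'hkl = (dm m)[i]'hi := by
        rw [List.getElem_of_eq (DL_succ m) hkl,
          List.getElem_append_right (Nat.le_add_right _ _)]
        simp only [Nat.add_sub_cancel_left]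
      rw [show ((G (m+1))[(DL m).length + i]'hkG).2.2.2 =
          ((DL (m+1))[(DL m).length + i]'hkl).2 from e1, e2, hxi]
      exact hxacc
  -- the words of Duplicator's run
  set us' : ℕ → List Si := fun k => (getIns (t k)).toList with hus'def
  set vs' : ℕ → List So := fun k => (getOuts (t k)).toList with hvs'def
  have hGtakeI : ∀ n K, K ≤ (G n).length → flat us' K = ((G n).take K).filterMap getIns :=
    fun n K hK => flat_toList_eq t G ht getIns n K hK
  have hGtakeO : ∀ n K, K ≤ (G n).length → flat vs' K = ((G n).take K).filterMap getOuts :=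
    fun n K hK => flat_toList_eq t G ht getOuts n K hK
  have hflatus : ∀ n, flat us n = (pL true n).filterMap Sum.getLeft? := by
    intro n
    induction n with
    | zero => rfl
    | succ n ih =>
      rw [flat_succ, pL_succ, List.filterMap_append, ih]
      congr 1
      have hsp1 : (sp n).1 = w n := rfl
      rcases hx : w n with a | b
      · rw [if_pos (by rw [hsp1, hx]; rfl), hsp1, hx]
        have h1 := hwu n
        rw [hx] at h1
        simpa using h1
      · rw [if_neg (by rw [hsp1, hx]; simp [hσdef])]
        have h1 := hwu n
        rw [hx] at h1
        simpa using h1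
  have hflatvs : ∀ n, flat vs n = (pL false n).filterMap Sum.getRight? := by
    intro n
    induction n with
    | zero => rfl
    | succ n ih =>
      rw [flat_succ, pL_succ, List.filterMap_append, ih]
      congr 1
      have hsp1 : (sp n).1 = w n := rfl
      rcases hx : w n with a | b
      · rw [if_neg (by rw [hsp1, hx]; simp [hσdef])]
        have h1 := hwv n
        rw [hx] at h1
        simpa using h1
      · rw [if_pos (by rw [hsp1, hx]; rfl), hsp1, hx]
        have h1 := hwv n
        rw [hx] at h1
        simpa using h1
  have hdir : ∀ (j : Bool), True := fun _ => trivial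
  have husEq : iConcat us = iConcat us' := by
    apply iConcat_congr
    · intro m
      obtain ⟨m1, hm1⟩ := hcons2 m true
      refine ⟨(G (max m m1)).length, ?_⟩
      rw [hGtakeI (max m m1) _ le_rfl, List.take_length, (INV (max m m1)).2.2.2.2.1,
        hflatus m]
      have hlen : (pL true m).length ≤ consumed dm true (max m m1) := by
        rw [← pL_len]
        exact hm1.trans (consumed_mono true (le_max_right m m1))
      have hpre : pL true m <+: (pL true (max m m1)).take (consumed dm true (max m m1)) := by
        obtain ⟨e, he⟩ := pL_prefix true (le_max_left m m1)
        have h1 : pL true m = (pL true (max m m1)).take (pL true m).length := by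
          rw [← he, List.take_left]
        have h2 : (pL true (max m m1)).take (pL true m).length =
            ((pL true (max m m1)).take (consumed dm true (max m m1))).take
              (pL true m).length := by
          rw [List.take_take, inf_eq_left.mpr hlen]
        rw [h1, h2]
        exact List.take_prefix _ _
      exact hpre.filterMap Sum.getLeft?
    · intro K
      obtain ⟨n, hn⟩ := hGunb K
      refine ⟨n, ?_⟩
      rw [hGtakeI n K (le_of_lt hn), hflatus n]
      have h1 : ((G n).take K).filterMap getIns <+: (G n).filterMap getIns :=
        (List.take_prefix _ _).filterMap _
      rw [(INV n).2.2.2.2.1] at h1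
      exact h1.trans ((List.take_prefix _ _).filterMap _)
  have hvsEq : iConcat vs = iConcat vs' := by
    apply iConcat_congr
    · intro m
      obtain ⟨m1, hm1⟩ := hcons2 m false
      refine ⟨(G (max m m1)).length, ?_⟩
      rw [hGtakeO (max m m1) _ le_rfl, List.take_length, (INV (max m m1)).2.2.2.2.2.1,
        hflatvs m]
      have hlen : (pL false m).length ≤ consumed dm false (max m m1) := by
        rw [← pL_len]
        exact hm1.trans (consumed_mono false (le_max_right m m1))
      have hpre : pL false m <+: (pL false (max m m1)).take (consumed dm false (max m m1)) := by
        obtain ⟨e, he⟩ := pL_prefix false (le_max_left m m1)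
        have h1 : pL false m = (pL false (max m m1)).take (pL false m).length := by
          rw [← he, List.take_left]
        have h2 : (pL false (max m m1)).take (pL false m).length =
            ((pL false (max m m1)).take (consumed dm false (max m m1))).take
              (pL false m).length := by
          rw [List.take_take, inf_eq_left.mpr hlen]
        rw [h1, h2]
        exact List.take_prefix _ _
      exact hpre.filterMap Sum.getRight?
    · intro K
      obtain ⟨n, hn⟩ := hGunb K
      refine ⟨n, ?_⟩
      rw [hGtakeO n K (le_of_lt hn), hflatvs n]
      have h1 : ((G n).take K).filterMap getOuts <+: (G n).filterMap getOuts :=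
        (List.take_prefix _ _).filterMap _
      rw [(INV n).2.2.2.2.2.1] at h1
      exact h1.trans ((List.take_prefix _ _).filterMap _)
  -- conclusion
  refine ⟨ρ', us', vs', hρ'0, ?_, ?_, hu.trans husEq, hv.trans hvsEq⟩
  · intro k
    have h3 := htransB k
    rcases hx : (t k).2.2.1 with a | b
    · rw [hx] at h3
      have hus : us' k = [a] := by
        show (getIns (t k)).toList = [a]
        rw [hgIdef]
        simp [hx]
      have hvs : vs' k = [] := by
        show (getOuts (t k)).toList = []
        rw [hgOdef]
        simp [hx]
      rw [hus, hvs]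
      exact h3
    · rw [hx] at h3
      have hus : us' k = [] := by
        show (getIns (t k)).toList = []
        rw [hgIdef]
        simp [hx]
      have hvs : vs' k = [b] := by
        show (getOuts (t k)).toList = [b]
        rw [hgOdef]
        simp [hx]
      rw [hus, hvs]
      exact h3
  · intro n
    obtain ⟨k, hk1, hk2⟩ := haccB n
    exact ⟨k, hk1, hk2⟩
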